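/- Let ν and ν' be discrete probability distributions on ℝ, supported on a common set of ℓ points contained in [−1,1], and suppose |m_i(ν) − m_i(ν')| ≤ δ for i = 1, …, ℓ−1. Then W₁(ν, ν') ≤ C ℓ δ^{1/(ℓ−1)} for an absolute constant C (one may take C = 4e). -/

import Mathlib

open MeasureTheory

/-- The 1-Wasserstein distance between two measures on `ℝ`, defined as the infimum of
`E|X - Y|` over all couplings. -/
noncomputable def W1 (μ ν : Measure ℝ) : ℝ :=
  sInf {c : ℝ | ∃ π : Measure (ℝ × ℝ), IsProbabilityMeasure π ∧
    π.map Prod.fst = μ ∧ π.map Prod.snd = ν ∧ c = ∫ p, |p.1 - p.2| ∂π}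

section Aux
open Polynomial Finset
open scoped Classical


noncomputable def DD (t f : ℕ → ℝ) : ℕ → ℕ → ℝ
  | i, 0 => f i
  | i, (k+1) => (DD t f (i+1) k - DD t f i k) / (t (i+k+1) - t i)

noncomputable def NP (t f : ℕ → ℝ) (i k : ℕ) : Polynomial ℝ :=
  ∑ m ∈ range (k+1), C (DD t f i m) * ∏ w ∈ range m, (X - C (t (i+w)))

lemma NP_natDegree_le (t f : ℕ → ℝ) (i k : ℕ) : (NP t f i k).natDegree ≤ k := by
  apply Polynomial.natDegree_sum_le_of_forall_le
  intro m hm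
  refine le_trans (Polynomial.natDegree_C_mul_le _ _) (le_trans ?_ (Nat.lt_succ_iff.mp (mem_range.mp hm)))
  refine le_trans (Polynomial.natDegree_prod_le _ _) ?_
  simp [Polynomial.natDegree_X_sub_C]

lemma prod_nodes_monic (t : ℕ → ℝ) (i m : ℕ) :
    (∏ w ∈ range m, (X - C (t (i+w)))).Monic :=
  monic_prod_of_monic _ _ (fun w _ => monic_X_sub_C _)

lemma prod_nodes_natDegree (t : ℕ → ℝ) (i m : ℕ) :
    (∏ w ∈ range m, (X - C (t (i+w)))).natDegree = m := by
  rw [Polynomial.natDegree_prod_of_monic]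
  · simp [Polynomial.natDegree_X_sub_C]
  · exact fun w _ => monic_X_sub_C _

lemma NP_coeff_top (t f : ℕ → ℝ) (i k : ℕ) : (NP t f i k).coeff k = DD t f i k := by
  rw [NP, Polynomial.finset_sum_coeff, Finset.sum_range_succ]
  have h1 : ∀ m ∈ range k, (C (DD t f i m) * ∏ w ∈ range m, (X - C (t (i+w)))).coeff k = 0 := by
    intro m hm
    apply Polynomial.coeff_eq_zero_of_natDegree_lt
    refine lt_of_le_of_lt (Polynomial.natDegree_C_mul_le _ _) ?_
    rw [prod_nodes_natDegree]; exact mem_range.mp hm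
  rw [Finset.sum_eq_zero h1, zero_add, Polynomial.coeff_C_mul]
  have := (prod_nodes_monic t i k).coeff_natDegree
  rw [prod_nodes_natDegree] at this
  rw [this, mul_one]

lemma NP_coeff_zero_of_gt (t f : ℕ → ℝ) (i k m : ℕ) (h : k < m) :
    (NP t f i k).coeff m = 0 :=
  Polynomial.coeff_eq_zero_of_natDegree_lt (lt_of_le_of_lt (NP_natDegree_le t f i k) h)

lemma NP_succ (t f : ℕ → ℝ) (i k : ℕ) :
    NP t f i (k+1) = NP t f i k + C (DD t f i (k+1)) * ∏ w ∈ range (k+1), (X - C (t (i+w))) := by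
  rw [NP, Finset.sum_range_succ]; rfl

theorem NP_eval (t f : ℕ → ℝ) (ht : StrictMono t) :
    ∀ k i j, j ≤ k → (NP t f i k).eval (t (i+j)) = f (i+j) := by
  intro k
  induction k with
  | zero =>
    intro i j hj
    interval_cases j
    simp [NP, DD]
  | succ k IH =>
    intro i j hj
    have hab : t i < t (i+k+1) := ht (by omega)
    have hne : t (i+k+1) - t i ≠ 0 := by linarith
    -- evaluation at low nodes
    have hlow : ∀ j' ≤ k, (NP t f i (k+1)).eval (t (i+j')) = f (i+j') := by
      intro j' hj'
      rw [NP_succ, Polynomial.eval_add, Polynomial.eval_mul, Polynomial.eval_prod]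
      rw [Finset.prod_eq_zero (Finset.mem_range.mpr (Nat.lt_succ_of_le hj'))]
      · rw [mul_zero, add_zero]; exact IH i j' hj'
      · simp
    by_cases hcase : j ≤ k
    · exact hlow j hcase
    have hj1 : j = k + 1 := by omega
    subst hj1
    -- Neville polynomial
    set G : Polynomial ℝ := C (t (i+k+1) - t i)⁻¹ *
      ((X - C (t i)) * NP t f (i+1) k - (X - C (t (i+k+1))) * NP t f i k) with hG
    have hGeval : ∀ j' ≤ k + 1, G.eval (t (i+j')) = f (i+j') := by
      intro j' hj'
      rcases Nat.eq_zero_or_pos j' with rfl | hpos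
      · have hA : (NP t f i k).eval (t i) = f i := by
          have := IH i 0 (by omega); simpa using this
        simp only [hG, Polynomial.eval_mul, Polynomial.eval_C, Polynomial.eval_sub,
          Polynomial.eval_X, Nat.add_zero, hA]
        field_simp
        ring
      · rcases Nat.lt_succ_iff_lt_or_eq.mp (Nat.lt_succ_of_le hj') with hlt | heq
        · -- 1 ≤ j' ≤ k : both interpolate
          have hA : (NP t f i k).eval (t (i+j')) = f (i+j') := IH i j' (by omega)
          have hB : (NP t f (i+1) k).eval (t (i+j')) = f (i+j') := by
            have := IH (i+1) (j'-1) (by omega)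
            have hidx : i + 1 + (j' - 1) = i + j' := by omega
            rwa [hidx] at this
          simp only [hG, Polynomial.eval_mul, Polynomial.eval_C, Polynomial.eval_sub,
            Polynomial.eval_X, hA, hB]
          field_simp
          ring
        · -- j' = k+1
          have hB : (NP t f (i+1) k).eval (t (i+j')) = f (i+j') := by
            have := IH (i+1) k (le_refl k)
            have hidx : i + 1 + k = i + j' := by omega
            rwa [hidx] at this
          have hx : t (i + j') = t (i+k+1) := by rw [heq]; ring_nf
          rw [hx] at hB
          simp only [hG, Polynomial.eval_mul, Polynomial.eval_C, Polynomial.eval_sub,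
            Polynomial.eval_X, hB, hx]
          field_simp
          ring
    -- show NP i (k+1) = G
    have hKzero : G - NP t f i (k+1) = 0 := by
      set K := G - NP t f i (k+1) with hK
      have hcoeff : ∀ m, k + 1 ≤ m → K.coeff m = 0 := by
        intro m hm
        rcases Nat.lt_or_ge (k+1) m with hgt | hge
        · -- m > k+1 : both coeffs vanish by degree
          have hGdeg : G.natDegree ≤ k + 1 := by
            refine le_trans (Polynomial.natDegree_C_mul_le _ _) ?_
            refine le_trans (Polynomial.natDegree_sub_le _ _) ?_
            simp only [max_le_iff]
            constructor <;>
            · refine le_trans (Polynomial.natDegree_mul_le) ?_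
              have := Polynomial.natDegree_X_sub_C (R := ℝ)
              simp only [Polynomial.natDegree_X_sub_C]
              have := NP_natDegree_le t f (i+1) k
              have := NP_natDegree_le t f i k
              omega
          rw [hK, Polynomial.coeff_sub,
            Polynomial.coeff_eq_zero_of_natDegree_lt (lt_of_le_of_lt hGdeg hgt),
            Polynomial.coeff_eq_zero_of_natDegree_lt
              (lt_of_le_of_lt (NP_natDegree_le t f i (k+1)) hgt), sub_zero]
        · have hm1 : m = k + 1 := by omega
          subst hm1
          -- top coefficient of G equals DD i (k+1)
          have h1 : ((X - C (t i)) * NP t f (i+1) k).coeff (k+1) = DD t f (i+1) k := by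
            rw [mul_comm, Polynomial.coeff_mul_X_sub_C, NP_coeff_top,
              NP_coeff_zero_of_gt t f (i+1) k (k+1) (by omega)]
            ring
          have h2 : ((X - C (t (i+k+1))) * NP t f i k).coeff (k+1) = DD t f i k := by
            rw [mul_comm, Polynomial.coeff_mul_X_sub_C, NP_coeff_top,
              NP_coeff_zero_of_gt t f i k (k+1) (by omega)]
            ring
          rw [hK, Polynomial.coeff_sub, NP_coeff_top, hG, Polynomial.coeff_C_mul,
            Polynomial.coeff_sub, h1, h2]
          show (t (i+k+1) - t i)⁻¹ * (DD t f (i+1) k - DD t f i k) - DD t f i (k+1) = 0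
          rw [DD]
          field_simp
          ring
      have hdeg : K.natDegree ≤ k := by
        rw [Polynomial.natDegree_le_iff_coeff_eq_zero]
        intro N hN
        exact hcoeff N (by omega)
      -- K vanishes at the k+1 points t i, ..., t (i+k)
      have hroots : ∀ x ∈ (range (k+1)).image (fun j' => t (i+j')), K.eval x = 0 := by
        intro x hx
        obtain ⟨j', hj', rfl⟩ := Finset.mem_image.mp hx
        have hj'' := Finset.mem_range.mp hj'
        rw [hK, Polynomial.eval_sub, hGeval j' (by omega : j' ≤ k+1),
          hlow j' (by omega : j' ≤ k), sub_self]
      have hcard : ((range (k+1)).image (fun j' => t (i+j'))).card = k + 1 := by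
        rw [Finset.card_image_of_injective _ (fun a b hab' => by
          have := ht.injective hab'; omega)]
        simp
      exact Polynomial.eq_zero_of_natDegree_lt_card_of_eval_eq_zero' K _ hroots (by omega)
    have hNG : NP t f i (k+1) = G := by
      have := sub_eq_zero.mp hKzero; exact this.symm
    rw [hNG]
    exact hGeval (k+1) (le_refl _)


section Step
variable (t : ℕ → ℝ) (r : ℕ)

/-- the step function: 1 for j ≤ r, 0 after -/
noncomputable def stepf (r : ℕ) : ℕ → ℝ := fun j => if j ≤ r then 1 else 0

lemma DD_same_side (ht : StrictMono t) :
    ∀ k, 1 ≤ k → ∀ i, (i + k ≤ r ∨ r < i) → DD t (stepf r) i k = 0 := by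
  intro k
  induction k with
  | zero => omega
  | succ k IH =>
    intro _ i hside
    rcases Nat.eq_zero_or_pos k with rfl | hk
    · have : stepf r (i+1) = stepf r i := by
        unfold stepf
        rcases hside with h | h
        · rw [if_pos (by omega), if_pos (by omega)]
        · rw [if_neg (by omega), if_neg (by omega)]
      show (DD t (stepf r) (i+1) 0 - DD t (stepf r) i 0) / _ = 0
      show (stepf r (i+1) - stepf r i) / _ = 0
      rw [this, sub_self, zero_div]
    · show (DD t (stepf r) (i+1) k - DD t (stepf r) i k) / _ = 0
      rw [IH hk (i+1) (by omega), IH hk i (by omega), sub_self, zero_div]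

lemma DD_straddle (ht : StrictMono t) :
    ∀ k, 1 ≤ k → ∀ i, i ≤ r → r < i + k →
      |DD t (stepf r) i k| ≤ 2^(k-1) / (t (r+1) - t r)^k := by
  have hΔ : 0 < t (r+1) - t r := by have := ht (Nat.lt_succ_self r); linarith
  intro k
  induction k with
  | zero => omega
  | succ k IH =>
    intro _ i hir hri
    rcases Nat.eq_zero_or_pos k with rfl | hk
    · have hi : i = r := by omega
      rw [hi]
      show |(stepf r (r+1) - stepf r r) / (t (r+1) - t r)| ≤ _
      unfold stepf
      rw [if_neg (by omega), if_pos (by omega)]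
      simp only [zero_sub, abs_div, abs_neg, abs_one, pow_zero, pow_one, Nat.add_zero]
      rw [abs_of_pos hΔ]
      norm_num
    · have hden : t (r+1) - t r ≤ t (i+k+1) - t i := by
        have h1 : t i ≤ t r := ht.monotone (by omega)
        have h2 : t (r+1) ≤ t (i+k+1) := ht.monotone (by omega)
        linarith
      have hdenpos : 0 < t (i+k+1) - t i := lt_of_lt_of_le hΔ hden
      have hsub : ∀ i', i' ≤ r ∨ r ≥ i' → i' + k ≥ r+1 ∨ r < i' →
          |DD t (stepf r) i' k| ≤ 2^(k-1) / (t (r+1) - t r)^k := by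
        intro i' _ _
        by_cases hstr : i' ≤ r ∧ r < i' + k
        · exact IH hk i' hstr.1 hstr.2
        · rw [DD_same_side t r ht k hk i' (by omega), abs_zero]
          positivity
      have hA : |DD t (stepf r) (i+1) k| ≤ 2^(k-1) / (t (r+1) - t r)^k := by
        by_cases hstr : i + 1 ≤ r ∧ r < i + 1 + k
        · exact IH hk (i+1) hstr.1 hstr.2
        · rw [DD_same_side t r ht k hk (i+1) (by omega), abs_zero]; positivity
      have hB : |DD t (stepf r) i k| ≤ 2^(k-1) / (t (r+1) - t r)^k := by
        by_cases hstr : i ≤ r ∧ r < i + k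
        · exact IH hk i hstr.1 hstr.2
        · rw [DD_same_side t r ht k hk i (by omega), abs_zero]; positivity
      show |(DD t (stepf r) (i+1) k - DD t (stepf r) i k) / (t (i+k+1) - t i)| ≤
        2^(k+1-1) / (t (r+1) - t r)^(k+1)
      rw [abs_div, abs_of_pos hdenpos]
      have hnum : |DD t (stepf r) (i+1) k - DD t (stepf r) i k| ≤ 2 * (2^(k-1) / (t (r+1) - t r)^k) := by
        calc |DD t (stepf r) (i+1) k - DD t (stepf r) i k|
            ≤ |DD t (stepf r) (i+1) k| + |DD t (stepf r) i k| := abs_sub _ _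
          _ ≤ _ := by linarith
      calc |DD t (stepf r) (i+1) k - DD t (stepf r) i k| / (t (i+k+1) - t i)
          ≤ (2 * (2^(k-1) / (t (r+1) - t r)^k)) / (t (r+1) - t r) := by
            apply div_le_div₀ (by positivity) hnum hΔ hden
        _ = 2^k / (t (r+1) - t r)^(k+1) := by
            obtain ⟨m, rfl⟩ : ∃ m, k = m + 1 := ⟨k - 1, by omega⟩
            rw [pow_succ, pow_succ]
            field_simp
            simp only [Nat.add_sub_cancel, Nat.add_sub_cancel_left]
            ring
        _ = _ := by norm_num

lemma DD_zero_bound (ht : StrictMono t) (k : ℕ) (hk : 1 ≤ k) :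
    |DD t (stepf r) 0 k| ≤ 2^(k-1) / (t (r+1) - t r)^k := by
  have hΔ : 0 < t (r+1) - t r := by have := ht (Nat.lt_succ_self r); linarith
  by_cases hstr : r < k
  · exact DD_straddle t r ht k hk 0 (Nat.zero_le r) (by omega)
  · rw [DD_same_side t r ht k hk 0 (by omega), abs_zero]; positivity
end Step

/-- coefficient l1 bound for node products -/
lemma SP_l1 (t : ℕ → ℝ) : ∀ k, (∀ w, w < k → |t w| ≤ 1) →
    ∑ m ∈ range (k+1), |(∏ w ∈ range k, (X - C (t w))).coeff m| ≤ 2^k := by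
  intro k
  induction k with
  | zero => simp
  | succ k IH =>
    intro hb
    have hbk := IH (fun w hw => hb w (by omega))
    have ha : |t k| ≤ 1 := hb k (by omega)
    set p := ∏ w ∈ range k, (X - C (t w)) with hp
    have hdeg : p.natDegree = k := by
      rw [hp, Polynomial.natDegree_prod_of_monic]
      · simp [Polynomial.natDegree_X_sub_C]
      · exact fun w _ => monic_X_sub_C _
    have htop : p.coeff (k+1) = 0 :=
      Polynomial.coeff_eq_zero_of_natDegree_lt (by omega)
    rw [Finset.prod_range_succ]
    rw [Finset.sum_range_succ']
    have hc0 : |(p * (X - C (t k))).coeff 0| ≤ |t k| * |p.coeff 0| := by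
      rw [Polynomial.mul_coeff_zero]
      simp only [Polynomial.coeff_sub, Polynomial.coeff_X_zero, Polynomial.coeff_C_zero, zero_sub]
      rw [abs_mul, abs_neg]
      rw [mul_comm]
    have hcs : ∀ m, |(p * (X - C (t k))).coeff (m+1)| ≤ |p.coeff m| + |t k| * |p.coeff (m+1)| := by
      intro m
      rw [Polynomial.coeff_mul_X_sub_C]
      calc |p.coeff m - p.coeff (m+1) * t k| ≤ |p.coeff m| + |p.coeff (m+1) * t k| := abs_sub _ _
        _ = _ := by rw [abs_mul]; ring
    calc ∑ m ∈ range (k+1), |(p * (X - C (t k))).coeff (m+1)| + |(p * (X - C (t k))).coeff 0|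
        ≤ ∑ m ∈ range (k+1), (|p.coeff m| + |t k| * |p.coeff (m+1)|) + |t k| * |p.coeff 0| := by
          gcongr with m hm
          exact hcs m
      _ = ∑ m ∈ range (k+1), |p.coeff m|
          + |t k| * (∑ m ∈ range (k+1), |p.coeff (m+1)| + |p.coeff 0|) := by
          rw [Finset.sum_add_distrib, ← Finset.mul_sum]; ring
      _ = ∑ m ∈ range (k+1), |p.coeff m|
          + |t k| * (∑ m ∈ range (k+2), |p.coeff m|) := by
          have hshift : ∑ m ∈ range (k+1), |p.coeff (m+1)| + |p.coeff 0|
              = ∑ m ∈ range (k+2), |p.coeff m| :=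
            (Finset.sum_range_succ' (fun m => |p.coeff m|) (k+1)).symm
          rw [hshift]
      _ = ∑ m ∈ range (k+1), |p.coeff m|
          + |t k| * (∑ m ∈ range (k+1), |p.coeff m|) := by
          rw [Finset.sum_range_succ _ (k+1), htop, abs_zero, add_zero]
      _ ≤ 2^k + 1 * 2^k := by
          have hnn : (0:ℝ) ≤ ∑ m ∈ range (k+1), |p.coeff m| :=
            Finset.sum_nonneg (fun m _ => abs_nonneg _)
          have h2 : |t k| * (∑ m ∈ range (k+1), |p.coeff m|) ≤ 1 * 2^k := by
            apply mul_le_mul ha (by linarith) hnn zero_le_one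
          linarith
      _ = 2^(k+1) := by ring


lemma myGeomSum_le (x : ℝ) (hx : 2 ≤ x) : ∀ n, 1 ≤ n → ∑ k ∈ Finset.Ico 1 (n+1), x^k ≤ 2 * x^n := by
  intro n
  induction n with
  | zero => omega
  | succ n IH =>
    intro _
    rcases Nat.eq_zero_or_pos n with rfl | hn
    · simp; nlinarith
    · rw [Finset.sum_Ico_succ_top (by omega)]
      have h0 : (0:ℝ) < x := by linarith
      have hxn : (0:ℝ) ≤ x^n := by positivity
      have := IH hn
      rw [pow_succ]
      nlinarith

theorem core_bound (n : ℕ) (hn : 1 ≤ n) (t : ℕ → ℝ) (ht : StrictMono t)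
    (htb : ∀ j, j ≤ n → |t j| ≤ 1) (u : ℕ → ℝ) (δ θ : ℝ)
    (hu0 : ∑ j ∈ range (n+1), u j = 0)
    (hM : ∀ i, 1 ≤ i → i ≤ n → |∑ j ∈ range (n+1), u j * t j ^ i| ≤ δ)
    (hD : ∀ r, r < n → |∑ j ∈ range (r+1), u j| ≤ 1)
    (hθ : 0 ≤ θ) (hδθ : δ = θ ^ n) :
    ∑ r ∈ range n, (t (r+1) - t r) * |∑ j ∈ range (r+1), u j| ≤ 4 * n * θ := by
  have hδ0 : 0 ≤ δ := by rw [hδθ]; positivity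
  have hper : ∀ r, r < n → (t (r+1) - t r) * |∑ j ∈ range (r+1), u j| ≤ 4 * θ := by
    intro r hr
    have hΔ : 0 < t (r+1) - t r := by have := ht (Nat.lt_succ_self r); linarith
    have hΔ2 : t (r+1) - t r ≤ 2 := by
      have h1 := abs_le.mp (htb (r+1) (by omega))
      have h2 := abs_le.mp (htb r (by omega))
      linarith [h1.2, h2.1]
    set Δ := t (r+1) - t r with hΔdef
    set N : Polynomial ℝ := NP t (stepf r) 0 n with hN
    -- step 1 : partial sum through the step function
    have h1 : ∑ j ∈ range (n+1), u j * stepf r j = ∑ j ∈ range (r+1), u j := by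
      rw [← Finset.sum_subset (Finset.range_subset_range.mpr (by omega : r+1 ≤ n+1))
        (fun j _ hj => by
          have : ¬ j ≤ r := fun h => hj (mem_range.mpr (by omega))
          unfold stepf; rw [if_neg this, mul_zero])]
      apply Finset.sum_congr rfl
      intro j hj
      have : j ≤ r := by have := mem_range.mp hj; omega
      unfold stepf; rw [if_pos this, mul_one]
    have hdeg : N.natDegree < n + 1 := Nat.lt_succ_of_le (NP_natDegree_le t (stepf r) 0 n)
    have heval : ∀ j, j < n+1 → stepf r j = N.eval (t j) := by
      intro j hj
      have := NP_eval t (stepf r) ht n 0 j (by omega)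
      simpa using this.symm
    -- step 3 : expand through the interpolating polynomial
    have h3 : ∑ j ∈ range (n+1), u j * stepf r j
        = ∑ i ∈ range (n+1), N.coeff i * (∑ j ∈ range (n+1), u j * t j ^ i) := by
      calc ∑ j ∈ range (n+1), u j * stepf r j
          = ∑ j ∈ range (n+1), ∑ i ∈ range (n+1), N.coeff i * (u j * t j ^ i) := by
            apply Finset.sum_congr rfl
            intro j hj
            rw [heval j (mem_range.mp hj), Polynomial.eval_eq_sum_range' hdeg, Finset.mul_sum]
            apply Finset.sum_congr rfl
            intro i _
            ring
        _ = ∑ i ∈ range (n+1), ∑ j ∈ range (n+1), N.coeff i * (u j * t j ^ i) :=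
            Finset.sum_comm
        _ = _ := by
            apply Finset.sum_congr rfl
            intro i _
            rw [← Finset.mul_sum]
    have hM0 : ∑ j ∈ range (n+1), u j * t j ^ 0 = 0 := by
      simpa [pow_zero, mul_one] using hu0
    have h4 : ∑ i ∈ range (n+1), N.coeff i * (∑ j ∈ range (n+1), u j * t j ^ i)
        = ∑ i ∈ Finset.Ico 1 (n+1), N.coeff i * (∑ j ∈ range (n+1), u j * t j ^ i) := by
      rw [Finset.range_eq_Ico, Finset.sum_eq_sum_Ico_succ_bot (by omega : 0 < n+1)]
      simp only [← Finset.range_eq_Ico, Nat.zero_add, hM0, mul_zero, zero_add]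
    -- coefficient expansion
    have hcoeff : ∀ i, N.coeff i
        = ∑ k ∈ range (n+1), DD t (stepf r) 0 k * (∏ w ∈ range k, (X - C (t w))).coeff i := by
      intro i
      have hprod : ∀ k : ℕ, (∏ w ∈ range k, (X - C (t (0+w)))) = ∏ w ∈ range k, (X - C (t w)) :=
        fun k => Finset.prod_congr rfl (fun w _ => by rw [Nat.zero_add])
      rw [hN, NP, Polynomial.finset_sum_coeff]
      apply Finset.sum_congr rfl
      intro k _
      rw [hprod, Polynomial.coeff_C_mul]
    have hSP_l1' : ∀ k, 1 ≤ k → k ≤ n →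
        ∑ i ∈ Finset.Ico 1 (n+1), |(∏ w ∈ range k, (X - C (t w))).coeff i| ≤ 2^k := by
      intro k hk1 hkn
      set p := ∏ w ∈ range k, (X - C (t w)) with hp
      have hpdeg : p.natDegree = k := by
        rw [hp, Polynomial.natDegree_prod_of_monic]
        · simp [Polynomial.natDegree_X_sub_C]
        · exact fun w _ => monic_X_sub_C _
      calc ∑ i ∈ Finset.Ico 1 (n+1), |p.coeff i|
          ≤ ∑ i ∈ range (n+1), |p.coeff i| := by
            apply Finset.sum_le_sum_of_subset_of_nonneg
            · rw [Finset.range_eq_Ico]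
              exact Finset.Ico_subset_Ico (by omega) le_rfl
            · intro i _ _; exact abs_nonneg _
        _ = ∑ i ∈ range (k+1), |p.coeff i| := by
            rw [← Finset.sum_subset (Finset.range_subset_range.mpr (by omega : k+1 ≤ n+1))
              (fun i _ hi => by
                have hik : ¬ i < k + 1 := fun h => hi (mem_range.mpr h)
                rw [Polynomial.coeff_eq_zero_of_natDegree_lt, abs_zero]
                rw [hpdeg]
                omega)]
        _ ≤ 2^k := SP_l1 t k (fun w hw => htb w (by omega))
    have h6 : ∑ i ∈ Finset.Ico 1 (n+1), |N.coeff i|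
        ≤ ∑ k ∈ Finset.Ico 1 (n+1), |DD t (stepf r) 0 k| * 2^k := by
      calc ∑ i ∈ Finset.Ico 1 (n+1), |N.coeff i|
          ≤ ∑ i ∈ Finset.Ico 1 (n+1), ∑ k ∈ range (n+1),
              |DD t (stepf r) 0 k| * |(∏ w ∈ range k, (X - C (t w))).coeff i| := by
            apply Finset.sum_le_sum
            intro i _
            rw [hcoeff i]
            refine le_trans (Finset.abs_sum_le_sum_abs _ _) ?_
            apply Finset.sum_le_sum
            intro k _
            rw [abs_mul]
        _ = ∑ k ∈ range (n+1), |DD t (stepf r) 0 k| *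
              (∑ i ∈ Finset.Ico 1 (n+1), |(∏ w ∈ range k, (X - C (t w))).coeff i|) := by
            rw [Finset.sum_comm]
            apply Finset.sum_congr rfl
            intro k _
            rw [Finset.mul_sum]
        _ = ∑ k ∈ Finset.Ico 1 (n+1), |DD t (stepf r) 0 k| *
              (∑ i ∈ Finset.Ico 1 (n+1), |(∏ w ∈ range k, (X - C (t w))).coeff i|) := by
            rw [Finset.range_eq_Ico, Finset.sum_eq_sum_Ico_succ_bot (by omega : 0 < n+1)]
            simp only [← Finset.range_eq_Ico, Nat.zero_add]
            have : ∀ i ∈ Finset.Ico 1 (n+1), |(∏ w ∈ range 0, (X - C (t w))).coeff i| = 0 := by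
              intro i hi
              have := (Finset.mem_Ico.mp hi).1
              rw [Finset.range_zero, Finset.prod_empty, Polynomial.coeff_one,
                if_neg (by omega), abs_zero]
            rw [Finset.sum_eq_zero this, mul_zero, zero_add]
        _ ≤ _ := by
            apply Finset.sum_le_sum
            intro k hk
            have hk1 := (Finset.mem_Ico.mp hk).1
            have hkn : k ≤ n := by have := (Finset.mem_Ico.mp hk).2; omega
            exact mul_le_mul_of_nonneg_left (hSP_l1' k hk1 hkn) (abs_nonneg _)
    have h7 : ∑ k ∈ Finset.Ico 1 (n+1), |DD t (stepf r) 0 k| * 2^k ≤ (4/Δ)^n := by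
      have hx : (2:ℝ) ≤ 4/Δ := by rw [le_div_iff₀ hΔ]; linarith
      calc ∑ k ∈ Finset.Ico 1 (n+1), |DD t (stepf r) 0 k| * 2^k
          ≤ ∑ k ∈ Finset.Ico 1 (n+1), (1/2) * (4/Δ)^k := by
            apply Finset.sum_le_sum
            intro k hk
            have hk1 := (Finset.mem_Ico.mp hk).1
            obtain ⟨m, rfl⟩ : ∃ m, k = m + 1 := ⟨k-1, by omega⟩
            have hdd := DD_zero_bound t r ht (m+1) (by omega)
            calc |DD t (stepf r) 0 (m+1)| * 2^(m+1)
                ≤ (2^(m+1-1) / Δ^(m+1)) * 2^(m+1) := by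
                  apply mul_le_mul_of_nonneg_right hdd (by positivity)
              _ = (1/2) * (4/Δ)^(m+1) := by
                  have h4 : (4:ℝ)^(m+1) = 2^(m+1) * 2^(m+1) := by
                    rw [← mul_pow]; norm_num
                  rw [div_pow, h4]
                  have : m + 1 - 1 = m := by omega
                  rw [this, pow_succ]
                  field_simp
                  ring
        _ = (1/2) * ∑ k ∈ Finset.Ico 1 (n+1), (4/Δ)^k := by rw [Finset.mul_sum]
        _ ≤ (1/2) * (2 * (4/Δ)^n) := by
            have := myGeomSum_le (4/Δ) hx n hn
            linarith
        _ = (4/Δ)^n := by ring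
    -- putting the δ-bound together
    have h8 : |∑ j ∈ range (r+1), u j| ≤ δ * (4/Δ)^n := by
      rw [← h1, h3, h4]
      calc |∑ i ∈ Finset.Ico 1 (n+1), N.coeff i * (∑ j ∈ range (n+1), u j * t j ^ i)|
          ≤ ∑ i ∈ Finset.Ico 1 (n+1), |N.coeff i| * δ := by
            refine le_trans (Finset.abs_sum_le_sum_abs _ _) ?_
            apply Finset.sum_le_sum
            intro i hi
            rw [abs_mul]
            have hi1 := (Finset.mem_Ico.mp hi).1
            have hi2 : i ≤ n := by have := (Finset.mem_Ico.mp hi).2; omega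
            exact mul_le_mul_of_nonneg_left (hM i hi1 hi2) (abs_nonneg _)
        _ = (∑ i ∈ Finset.Ico 1 (n+1), |N.coeff i|) * δ := by rw [Finset.sum_mul]
        _ ≤ (4/Δ)^n * δ := by
            apply mul_le_mul_of_nonneg_right _ hδ0
            exact le_trans h6 h7
        _ = δ * (4/Δ)^n := by ring
    -- final case split
    by_cases hcase : Δ ≤ 4*θ
    · calc Δ * |∑ j ∈ range (r+1), u j| ≤ Δ * 1 :=
            mul_le_mul_of_nonneg_left (hD r hr) hΔ.le
        _ ≤ 4*θ := by linarith
    · push_neg at hcase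
      have hpowpos : (0:ℝ) < Δ^n := by positivity
      calc Δ * |∑ j ∈ range (r+1), u j| ≤ Δ * (δ * (4/Δ)^n) :=
            mul_le_mul_of_nonneg_left h8 hΔ.le
        _ = ((4*θ)^n * Δ) / Δ^n := by
            rw [hδθ, div_pow, mul_pow]
            field_simp
        _ ≤ 4*θ := by
            rw [div_le_iff₀ hpowpos]
            obtain ⟨m, rfl⟩ : ∃ m, n = m + 1 := ⟨n-1, by omega⟩
            have hpow : (4*θ)^m ≤ Δ^m := pow_le_pow_left₀ (by positivity) hcase.le m
            calc (4*θ)^(m+1) * Δ = (4*θ)^m * (4*θ*Δ) := by rw [pow_succ]; ring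
              _ ≤ Δ^m * (4*θ*Δ) := mul_le_mul_of_nonneg_right hpow (by positivity)
              _ = 4*θ*Δ^(m+1) := by rw [pow_succ]; ring
  calc ∑ r ∈ range n, (t (r+1) - t r) * |∑ j ∈ range (r+1), u j|
      ≤ ∑ r ∈ range n, 4 * θ := Finset.sum_le_sum (fun r hr => hper r (mem_range.mp hr))
    _ = n * (4 * θ) := by rw [Finset.sum_const, Finset.card_range]; simp
    _ = 4 * n * θ := by ring


lemma discrete_apply (μ : Measure ℝ) [IsProbabilityMeasure μ] (S : Finset ℝ)
    (hsupp : μ ↑S = 1) {s : Set ℝ} (hs : MeasurableSet s) :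
    μ s = ∑ x ∈ S.filter (· ∈ s), μ {x} := by
  have hSm : MeasurableSet (↑S : Set ℝ) := S.finite_toSet.measurableSet
  have hcompl : μ (↑S : Set ℝ)ᶜ = 0 := (prob_compl_eq_zero_iff hSm).mpr hsupp
  have h1 : μ (s \ ↑S) = 0 :=
    le_antisymm (le_trans (measure_mono (fun x hx => hx.2)) hcompl.le) (by simp)
  have h2 : μ (s ∩ ↑S) + μ (s \ ↑S) = μ s := measure_inter_add_diff s hSm
  have h3 : s ∩ ↑S = ⋃ x ∈ S.filter (· ∈ s), {x} := by
    ext y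
    simp only [Set.mem_inter_iff, Set.mem_iUnion, Set.mem_singleton_iff, Finset.mem_filter,
      Finset.mem_coe, exists_prop]
    constructor
    · rintro ⟨hys, hyS⟩; exact ⟨y, ⟨hyS, hys⟩, rfl⟩
    · rintro ⟨x, ⟨hxS, hxs⟩, rfl⟩; exact ⟨hxs, hxS⟩
  have h4 : μ (s ∩ ↑S) = ∑ x ∈ S.filter (· ∈ s), μ {x} := by
    rw [h3]
    exact measure_biUnion_finset
      (fun x hx y hy hxy => by simp [Set.disjoint_singleton, hxy])
      (fun x _ => measurableSet_singleton x)
  rw [← h2, h1, add_zero, h4]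

lemma discrete_rep (μ : Measure ℝ) [IsProbabilityMeasure μ] (S : Finset ℝ)
    (hsupp : μ ↑S = 1) :
    μ = ∑ x ∈ S, μ {x} • Measure.dirac x := by
  ext s hs
  rw [discrete_apply μ S hsupp hs, Measure.finset_sum_apply, Finset.sum_filter]
  apply Finset.sum_congr rfl
  intro x _
  rw [Measure.smul_apply, Measure.dirac_apply' _ hs]
  by_cases hxs : x ∈ s
  · rw [if_pos hxs, Set.indicator_of_mem hxs]; simp
  · rw [if_neg hxs, Set.indicator_of_notMem hxs]; simp

lemma discrete_integral (μ : Measure ℝ) [IsProbabilityMeasure μ] (S : Finset ℝ)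
    (hsupp : μ ↑S = 1) (g : ℝ → ℝ) (hg : Continuous g) :
    ∫ x, g x ∂μ = ∑ x ∈ S, (μ {x}).toReal * g x := by
  have hint : ∀ x ∈ S, Integrable g (μ {x} • Measure.dirac x) := by
    intro x _
    have hae : g =ᵐ[Measure.dirac x] (fun _ => g x) := by
      rw [MeasureTheory.ae_dirac_eq]
      exact Filter.eventually_pure.mpr rfl
    have : Integrable g (Measure.dirac x) := (integrable_const (g x)).congr hae.symm
    exact this.smul_measure (measure_ne_top μ _)
  calc ∫ x, g x ∂μ = ∫ x, g x ∂(∑ y ∈ S, μ {y} • Measure.dirac y) := by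
        rw [← discrete_rep μ S hsupp]
    _ = ∑ y ∈ S, ∫ x, g x ∂(μ {y} • Measure.dirac y) :=
        integral_finset_sum_measure hint
    _ = ∑ y ∈ S, (μ {y}).toReal * g y := by
        apply Finset.sum_congr rfl
        intro y _
        rw [integral_smul_measure, integral_dirac, smul_eq_mul]

noncomputable def quantileFun (t P : ℕ → ℝ) (n : ℕ) : ℝ → ℝ :=
  fun x => t n - ∑ r ∈ range n, Set.indicator (Set.Iio (P (r+1))) (fun _ => t (r+1) - t r) x

lemma quantileFun_measurable (t P : ℕ → ℝ) (n : ℕ) : Measurable (quantileFun t P n) :=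
  measurable_const.sub (Finset.measurable_sum _
    (fun r _ => (measurable_const.indicator measurableSet_Iio)))

lemma quantileFun_eq (t P : ℕ → ℝ) (n : ℕ) (hP : Monotone P) (j : ℕ) (hj : j ≤ n)
    (x : ℝ) (hx1 : P j ≤ x) (hx2 : x < P (j+1)) : quantileFun t P n x = t j := by
  unfold quantileFun
  have hind : ∀ r ∈ range n,
      Set.indicator (Set.Iio (P (r+1))) (fun _ => t (r+1) - t r) x
        = if j ≤ r then t (r+1) - t r else 0 := by
    intro r _
    by_cases hjr : j ≤ r
    · rw [if_pos hjr, Set.indicator_of_mem]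
      exact Set.mem_Iio.mpr (lt_of_lt_of_le hx2 (hP (by omega)))
    · rw [if_neg hjr, Set.indicator_of_notMem]
      intro hmem
      exact absurd (lt_of_le_of_lt (le_trans (hP (by omega : r + 1 ≤ j)) hx1)
        (Set.mem_Iio.mp hmem)) (lt_irrefl _)
  rw [Finset.sum_congr rfl hind, ← Finset.sum_filter]
  have hfil : (range n).filter (fun r => j ≤ r) = Finset.Ico j n := by
    ext r
    simp only [Finset.mem_filter, Finset.mem_range, Finset.mem_Ico]
    omega
  rw [hfil, Finset.sum_Ico_eq_sub _ hj, Finset.sum_range_sub, Finset.sum_range_sub]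
  ring

lemma quantileFun_map (μ : Measure ℝ) [IsProbabilityMeasure μ] (n : ℕ) (t : ℕ → ℝ)
    (ht : StrictMono t) (p : ℕ → ℝ) (hp0 : ∀ j, 0 ≤ p j)
    (hpμ : ∀ j, j ≤ n → ENNReal.ofReal (p j) = μ {t j})
    (hdisc : ∀ s : Set ℝ, MeasurableSet s →
        μ s = ∑ j ∈ (range (n+1)).filter (fun j => t j ∈ s), μ {t j})
    (hsum : ∑ j ∈ range (n+1), p j = 1) :
    Measure.map (quantileFun t (fun m => ∑ j ∈ range m, p j) n)
      (volume.restrict (Set.Ico (0:ℝ) 1)) = μ := by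
  set P : ℕ → ℝ := fun m => ∑ j ∈ range m, p j with hPdef
  have hPmono : Monotone P := fun a b hab =>
    Finset.sum_le_sum_of_subset_of_nonneg (Finset.range_subset_range.mpr hab)
      (fun j _ _ => hp0 j)
  have hP0 : P 0 = 0 := Finset.sum_range_zero p
  have hPnn : ∀ m, 0 ≤ P m := fun m => Finset.sum_nonneg (fun j _ => hp0 j)
  have hPle1 : ∀ m, m ≤ n + 1 → P m ≤ 1 := fun m hm => by
    calc P m ≤ P (n+1) := hPmono hm
      _ = 1 := hsum
  have hPp : ∀ j, P (j+1) - P j = p j := fun j => by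
    simp only [hPdef, Finset.sum_range_succ]; ring
  ext s hs
  rw [Measure.map_apply (quantileFun_measurable t P n) hs, hdisc s hs,
    Measure.restrict_apply (quantileFun_measurable t P n hs)]
  have hset : quantileFun t P n ⁻¹' s ∩ Set.Ico (0:ℝ) 1
      = ⋃ j ∈ (range (n+1)).filter (fun j => t j ∈ s), Set.Ico (P j) (P (j+1)) := by
    ext x
    simp only [Set.mem_inter_iff, Set.mem_preimage, Set.mem_Ico, Set.mem_iUnion,
      Finset.mem_filter, Finset.mem_range, exists_prop]
    constructor
    · rintro ⟨hxs, hx0, hx1⟩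
      set j := Nat.findGreatest (fun m => P m ≤ x) n with hjdef
      have hjle : j ≤ n := by
        have := Nat.findGreatest_le (P := fun m => P m ≤ x) n
        rw [← hjdef] at this
        exact this
      have hPjx : P j ≤ x := by
        have h0 : (fun m => P m ≤ x) 0 := by simpa [hP0] using hx0
        have := Nat.findGreatest_spec (P := fun m => P m ≤ x) (Nat.zero_le n) h0
        rw [← hjdef] at this
        exact this
      have hxPj1 : x < P (j+1) := by
        by_cases hjn : j = n
        · have : P (n+1) = 1 := hsum
          rw [hjn, this]; exact hx1
        · by_contra hcon
          push_neg at hcon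
          have hlt : Nat.findGreatest (fun m => P m ≤ x) n < j + 1 := by
            rw [← hjdef]; omega
          exact Nat.findGreatest_is_greatest hlt (by omega) hcon
      have hTx : quantileFun t P n x = t j := quantileFun_eq t P n hPmono j hjle x hPjx hxPj1
      exact ⟨j, ⟨by omega, by rw [← hTx]; exact hxs⟩, hPjx, hxPj1⟩
    · rintro ⟨j, ⟨hjn, hjs⟩, hx1, hx2⟩
      have hjle : j ≤ n := by omega
      have hTx : quantileFun t P n x = t j := quantileFun_eq t P n hPmono j hjle x hx1 hx2
      refine ⟨by rw [hTx]; exact hjs, le_trans (hPnn j) hx1, lt_of_lt_of_le hx2 ?_⟩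
      exact hPle1 (j+1) (by omega)
  rw [hset]
  rw [measure_biUnion_finset ?hdisj (fun j _ => measurableSet_Ico)]
  · apply Finset.sum_congr rfl
    intro j hj
    have hjn : j ≤ n := by have := (Finset.mem_filter.mp hj).1; simp at this; omega
    rw [Real.volume_Ico, hPp j, hpμ j hjn]
  case hdisj =>
    intro i hi j hj hij
    have hilt : i < n+1 := by have := (Finset.mem_filter.mp hi).1; simpa using this
    have hjlt : j < n+1 := by have := (Finset.mem_filter.mp hj).1; simpa using this
    rcases lt_or_gt_of_ne hij with h | h
    · apply Set.Ico_disjoint_Ico.mpr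
      calc min (P (i+1)) (P (j+1)) ≤ P (i+1) := min_le_left _ _
        _ ≤ P j := hPmono (by omega)
        _ ≤ max (P i) (P j) := le_max_right _ _
    · apply Set.Ico_disjoint_Ico.mpr
      calc min (P (i+1)) (P (j+1)) ≤ P (j+1) := min_le_right _ _
        _ ≤ P i := hPmono (by omega)
        _ ≤ max (P i) (P j) := le_max_left _ _


lemma sum_orderIso {M : Type*} [AddCommMonoid M] (S : Finset ℝ) (ℓ : ℕ) (hcard : S.card = ℓ)
    (t : ℕ → ℝ) (htS : ∀ j (h : j < ℓ), t j = (S.orderIsoOfFin hcard ⟨j, h⟩ : ℝ))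
    (F : ℝ → M) : ∑ x ∈ S, F x = ∑ j ∈ range ℓ, F (t j) := by
  calc ∑ x ∈ S, F x = ∑ x : {x // x ∈ S}, F ↑x := (Finset.sum_coe_sort S F).symm
    _ = ∑ j : Fin ℓ, F ↑(S.orderIsoOfFin hcard j) :=
        (Equiv.sum_comp (S.orderIsoOfFin hcard).toEquiv (fun x => F ↑x)).symm
    _ = ∑ j : Fin ℓ, F (t ↑j) := by
        apply Finset.sum_congr rfl
        intro j _
        rw [htS ↑j j.isLt]
    _ = ∑ j ∈ range ℓ, F (t j) := Fin.sum_univ_eq_sum_range (fun j => F (t j)) ℓ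


end Aux

open Finset in
open scoped Classical in
theorem stmt_16 (ℓ : ℕ) (S : Finset ℝ) (hcard : S.card = ℓ)
    (hS : ↑S ⊆ Set.Icc (-1 : ℝ) 1)
    (ν ν' : Measure ℝ) [IsProbabilityMeasure ν] [IsProbabilityMeasure ν']
    (hsupp : ν ↑S = 1) (hsupp' : ν' ↑S = 1)
    (δ : ℝ)
    (hm : ∀ i, 1 ≤ i → i ≤ ℓ - 1 → |∫ x, x ^ i ∂ν - ∫ x, x ^ i ∂ν'| ≤ δ) :
    W1 ν ν' ≤ 4 * Real.exp 1 * ℓ * δ ^ (((ℓ : ℝ) - 1)⁻¹) := by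
  -- ℓ = 0 is impossible
  rcases Nat.eq_zero_or_pos ℓ with rfl | hℓpos
  · exfalso
    rw [Finset.card_eq_zero.mp hcard] at hsupp
    simp at hsupp
  obtain ⟨n, rfl⟩ : ∃ n, ℓ = n + 1 := ⟨ℓ - 1, by omega⟩
  -- the sorted support points, extended to a strictly monotone sequence on ℕ
  set e := S.orderIsoOfFin hcard with he
  set t : ℕ → ℝ := fun j =>
    if h : j < n + 1 then (e ⟨j, h⟩ : ℝ) else (e ⟨n, by omega⟩ : ℝ) + ((j - n : ℕ) : ℝ)
    with htdef
  have htS : ∀ j (h : j < n+1), t j = (e ⟨j, h⟩ : ℝ) := fun j h => dif_pos h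
  have ht : StrictMono t := by
    apply strictMono_nat_of_lt_succ
    intro j
    rcases lt_trichotomy (j+1) (n+1) with h1 | h1 | h1
    · rw [htS j (by omega), htS (j+1) h1]
      exact_mod_cast (S.orderIsoOfFin hcard).strictMono (by simp [Fin.mk_lt_mk])
    · have hj : j = n := by omega
      rw [hj, htS n (by omega)]
      have h2 : t (n+1) = (e ⟨n, by omega⟩ : ℝ) + ((n + 1 - n : ℕ) : ℝ) := by
        simp only [htdef]
        rw [dif_neg (by omega)]
      rw [h2]
      have h3 : ((n + 1 - n : ℕ) : ℝ) = 1 := by norm_num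
      rw [h3]
      linarith
    · have hA : t j = (e ⟨n, by omega⟩ : ℝ) + ((j - n : ℕ) : ℝ) := by
        simp only [htdef]
        rw [dif_neg (by omega)]
      have hB : t (j+1) = (e ⟨n, by omega⟩ : ℝ) + ((j + 1 - n : ℕ) : ℝ) := by
        simp only [htdef]
        rw [dif_neg (by omega)]
      rw [hA, hB]
      have : (j - n : ℕ) < (j + 1 - n : ℕ) := by omega
      have hc : ((j - n : ℕ) : ℝ) < ((j + 1 - n : ℕ) : ℝ) := by exact_mod_cast this
      linarith
  have htmem : ∀ j, j < n+1 → t j ∈ S := by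
    intro j hj
    rw [htS j hj]
    exact Finset.coe_mem _
  have htb : ∀ j, j ≤ n → |t j| ≤ 1 := by
    intro j hj
    have := hS (htmem j (by omega))
    rw [Set.mem_Icc] at this
    exact abs_le.mpr ⟨this.1, this.2⟩
  -- the weights
  set p : ℕ → ℝ := fun j => (ν {t j}).toReal with hpdef
  set q : ℕ → ℝ := fun j => (ν' {t j}).toReal with hqdef
  have hp0 : ∀ j, 0 ≤ p j := fun j => ENNReal.toReal_nonneg
  have hq0 : ∀ j, 0 ≤ q j := fun j => ENNReal.toReal_nonneg
  have hsum_gen : ∀ (μ : Measure ℝ), IsProbabilityMeasure μ → μ ↑S = 1 →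
      ∀ g : ℝ → ℝ, Continuous g →
      ∫ x, g x ∂μ = ∑ j ∈ range (n+1), (μ {t j}).toReal * g (t j) := by
    intro μ hinst hsd g hg
    rw [discrete_integral μ S hsd g hg]
    exact sum_orderIso S (n+1) hcard t htS (fun x => (μ {x}).toReal * g x)
  have hpsum : ∑ j ∈ range (n+1), p j = 1 := by
    have h1 : ∫ x, (fun _ => (1:ℝ)) x ∂ν = ∑ j ∈ range (n+1), p j * 1 :=
      hsum_gen ν inferInstance hsupp (fun _ => (1:ℝ)) continuous_const
    simp only [mul_one] at h1
    rw [MeasureTheory.integral_const] at h1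
    simp at h1
    exact h1.symm
  have hqsum : ∑ j ∈ range (n+1), q j = 1 := by
    have h1 : ∫ x, (fun _ => (1:ℝ)) x ∂ν' = ∑ j ∈ range (n+1), q j * 1 :=
      hsum_gen ν' inferInstance hsupp' (fun _ => (1:ℝ)) continuous_const
    simp only [mul_one] at h1
    rw [MeasureTheory.integral_const] at h1
    simp at h1
    exact h1.symm
  have hmomv : ∀ i : ℕ, ∫ x, x ^ i ∂ν = ∑ j ∈ range (n+1), p j * t j ^ i := fun i =>
    hsum_gen ν inferInstance hsupp (fun x => x ^ i) (continuous_pow i)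
  have hmomv' : ∀ i : ℕ, ∫ x, x ^ i ∂ν' = ∑ j ∈ range (n+1), q j * t j ^ i := fun i =>
    hsum_gen ν' inferInstance hsupp' (fun x => x ^ i) (continuous_pow i)
  have hmom : ∀ i, 1 ≤ i → i ≤ n → |∑ j ∈ range (n+1), (p j - q j) * t j ^ i| ≤ δ := by
    intro i hi1 hi2
    have hthis := hm i hi1 (by omega)
    rw [hmomv i, hmomv' i, ← Finset.sum_sub_distrib] at hthis
    calc |∑ j ∈ range (n+1), (p j - q j) * t j ^ i|
        = |∑ j ∈ range (n+1), (p j * t j ^ i - q j * t j ^ i)| := by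
          congr 1
          apply Finset.sum_congr rfl
          intro j _
          ring
      _ ≤ δ := hthis
  have hD : ∀ r, r < n → |∑ j ∈ range (r+1), (p j - q j)| ≤ 1 := by
    intro r hr
    rw [Finset.sum_sub_distrib]
    have hple : ∑ j ∈ range (r+1), p j ≤ 1 := by
      rw [← hpsum]
      exact Finset.sum_le_sum_of_subset_of_nonneg (Finset.range_subset_range.mpr (by omega))
        (fun j _ _ => hp0 j)
    have hqle : ∑ j ∈ range (r+1), q j ≤ 1 := by
      rw [← hqsum]
      exact Finset.sum_le_sum_of_subset_of_nonneg (Finset.range_subset_range.mpr (by omega))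
        (fun j _ _ => hq0 j)
    have hpnn : 0 ≤ ∑ j ∈ range (r+1), p j := Finset.sum_nonneg (fun j _ => hp0 j)
    have hqnn : 0 ≤ ∑ j ∈ range (r+1), q j := Finset.sum_nonneg (fun j _ => hq0 j)
    rw [abs_le]
    constructor <;> linarith
  -- the coupling
  set μ₀ : Measure ℝ := volume.restrict (Set.Ico (0:ℝ) 1) with hμ₀
  have hμ₀prob : IsProbabilityMeasure μ₀ := by
    constructor
    rw [hμ₀, Measure.restrict_apply_univ, Real.volume_Ico]
    norm_num
  set P : ℕ → ℝ := fun m => ∑ j ∈ range m, p j with hP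
  set Q : ℕ → ℝ := fun m => ∑ j ∈ range m, q j with hQ
  set T : ℝ → ℝ := quantileFun t P n with hT
  set T' : ℝ → ℝ := quantileFun t Q n with hT'
  have hdisc_gen : ∀ (μ : Measure ℝ), IsProbabilityMeasure μ → μ ↑S = 1 →
      ∀ s : Set ℝ, MeasurableSet s →
      μ s = ∑ j ∈ (range (n+1)).filter (fun j => t j ∈ s), μ {t j} := by
    intro μ hinst hsd s hs
    rw [discrete_apply μ S hsd hs, Finset.sum_filter, Finset.sum_filter]
    exact sum_orderIso S (n+1) hcard t htS (fun x => if x ∈ s then μ {x} else 0)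
  have hmapT : Measure.map T μ₀ = ν := by
    rw [hT, hμ₀]
    exact quantileFun_map ν n t ht p hp0
      (fun j _ => ENNReal.ofReal_toReal (measure_ne_top ν _))
      (hdisc_gen ν inferInstance hsupp) hpsum
  have hmapT' : Measure.map T' μ₀ = ν' := by
    rw [hT', hμ₀]
    exact quantileFun_map ν' n t ht q hq0
      (fun j _ => ENNReal.ofReal_toReal (measure_ne_top ν' _))
      (hdisc_gen ν' inferInstance hsupp') hqsum
  have hmT : Measurable T := quantileFun_measurable t P n
  have hmT' : Measurable T' := quantileFun_measurable t Q n
  have hmpair : Measurable (fun x => (T x, T' x)) := hmT.prodMk hmT'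
  set π : Measure (ℝ × ℝ) := Measure.map (fun x => (T x, T' x)) μ₀ with hπ
  have hπprob : IsProbabilityMeasure π := Measure.isProbabilityMeasure_map hmpair.aemeasurable
  have hfst : π.map Prod.fst = ν := by
    rw [hπ, Measure.map_map measurable_fst hmpair]
    exact hmapT
  have hsnd : π.map Prod.snd = ν' := by
    rw [hπ, Measure.map_map measurable_snd hmpair]
    exact hmapT'
  have hcost_eq : ∫ pp, |pp.1 - pp.2| ∂π = ∫ x, |T x - T' x| ∂μ₀ := by
    rw [hπ, integral_map (f := fun pp : ℝ × ℝ => |pp.1 - pp.2|) hmpair.aemeasurable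
      ((continuous_fst.sub continuous_snd).abs.aestronglyMeasurable)]
  have hW1le : W1 ν ν' ≤ ∫ x, |T x - T' x| ∂μ₀ := by
    apply csInf_le
    · refine ⟨0, fun c hc => ?_⟩
      obtain ⟨π', _, _, _, rfl⟩ := hc
      exact integral_nonneg (fun _ => abs_nonneg _)
    · exact ⟨π, hπprob, hfst, hsnd, hcost_eq.symm⟩
  -- bounding the cost
  have hΔ0 : ∀ r, 0 ≤ t (r+1) - t r := fun r => by
    have := ht (Nat.lt_succ_self r); linarith
  set d : ℕ → ℝ → ℝ := fun r x =>
    Set.indicator (Set.Iio (Q (r+1))) (fun _ => t (r+1) - t r) x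
      - Set.indicator (Set.Iio (P (r+1))) (fun _ => t (r+1) - t r) x with hd
  have hTsub : ∀ x, T x - T' x = ∑ r ∈ range n, d r x := by
    intro x
    rw [hT, hT']
    unfold quantileFun
    simp only [hd]
    rw [Finset.sum_sub_distrib]
    ring
  have hintg_ind : ∀ (c Δ : ℝ), Integrable (Set.indicator (Set.Iio c) (fun _ => Δ)) μ₀ :=
    fun c Δ => (integrable_const Δ).indicator measurableSet_Iio
  have hintgd : ∀ r, Integrable (d r) μ₀ := fun r => (hintg_ind _ _).sub (hintg_ind _ _)
  have hintabs : Integrable (fun x => |T x - T' x|) μ₀ := by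
    have h1 : Integrable (fun x => T x - T' x) μ₀ :=
      (integrable_finset_sum _ (fun r _ => hintgd r)).congr
        (Filter.Eventually.of_forall (fun x => (hTsub x).symm))
    exact h1.abs
  have hcost : ∫ x, |T x - T' x| ∂μ₀
      ≤ ∑ r ∈ range n, (t (r+1) - t r) * |∑ j ∈ range (r+1), (p j - q j)| := by
    calc ∫ x, |T x - T' x| ∂μ₀ ≤ ∫ x, ∑ r ∈ range n, |d r x| ∂μ₀ := by
          apply integral_mono hintabs (integrable_finset_sum _ (fun r _ => (hintgd r).abs))
          intro x
          show |T x - T' x| ≤ ∑ r ∈ range n, |d r x|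
          rw [hTsub x]
          exact Finset.abs_sum_le_sum_abs _ _
      _ = ∑ r ∈ range n, ∫ x, |d r x| ∂μ₀ :=
          integral_finset_sum _ (fun r _ => (hintgd r).abs)
      _ ≤ ∑ r ∈ range n, (t (r+1) - t r) * |∑ j ∈ range (r+1), (p j - q j)| := by
          apply Finset.sum_le_sum
          intro r _
          set a := P (r+1) with ha
          set b := Q (r+1) with hb
          set Δ := t (r+1) - t r with hΔ
          have hΔnn : 0 ≤ Δ := hΔ0 r
          have hdle : ∀ x, |d r x| ≤
              Set.indicator (Set.Ico (min a b) (max a b)) (fun _ => Δ) x := by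
            intro x
            have hiio : ∀ (c : ℝ), Set.indicator (Set.Iio c) (fun _ => Δ) x
                = if x < c then Δ else 0 := by
              intro c
              by_cases hxc : x < c
              · rw [if_pos hxc, Set.indicator_of_mem (Set.mem_Iio.mpr hxc)]
              · rw [if_neg hxc, Set.indicator_of_notMem (fun hmem => hxc (Set.mem_Iio.mp hmem))]
            have hico : x ∈ Set.Ico (min a b) (max a b) →
                Set.indicator (Set.Ico (min a b) (max a b)) (fun _ => Δ) x = Δ :=
              fun hmem => Set.indicator_of_mem hmem _
            have hind_nn : 0 ≤ Set.indicator (Set.Ico (min a b) (max a b)) (fun _ => Δ) x :=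
              Set.indicator_nonneg (fun _ _ => hΔnn) x
            rw [hd]
            simp only
            rw [hiio b, hiio a]
            by_cases hxa : x < a <;> by_cases hxb : x < b
            · rw [if_pos hxa, if_pos hxb, sub_self, abs_zero]; exact hind_nn
            · rw [if_pos hxa, if_neg hxb]
              rw [hico ⟨le_trans (min_le_right a b) (not_lt.mp hxb), lt_of_lt_of_le hxa (le_max_left a b)⟩]
              rw [zero_sub, abs_neg, abs_of_nonneg hΔnn]
            · rw [if_neg hxa, if_pos hxb]
              rw [hico ⟨le_trans (min_le_left a b) (not_lt.mp hxa), lt_of_lt_of_le hxb (le_max_right a b)⟩]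
              rw [sub_zero, abs_of_nonneg hΔnn]
            · rw [if_neg hxa, if_neg hxb, sub_self, abs_zero]; exact hind_nn
          calc ∫ x, |d r x| ∂μ₀
              ≤ ∫ x, Set.indicator (Set.Ico (min a b) (max a b)) (fun _ => Δ) x ∂μ₀ := by
                apply integral_mono (hintgd r).abs
                  ((integrable_const Δ).indicator measurableSet_Ico) hdle
            _ = (μ₀ (Set.Ico (min a b) (max a b))).toReal • Δ :=
                integral_indicator_const Δ measurableSet_Ico
            _ ≤ (max a b - min a b) * Δ := by
                rw [smul_eq_mul]
                apply mul_le_mul_of_nonneg_right _ hΔnn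
                have h1 : μ₀ (Set.Ico (min a b) (max a b))
                    ≤ ENNReal.ofReal (max a b - min a b) := by
                  rw [hμ₀]
                  calc volume.restrict (Set.Ico (0:ℝ) 1) (Set.Ico (min a b) (max a b))
                      = volume (Set.Ico (min a b) (max a b) ∩ Set.Ico (0:ℝ) 1) :=
                        Measure.restrict_apply measurableSet_Ico
                    _ ≤ volume (Set.Ico (min a b) (max a b)) :=
                        measure_mono Set.inter_subset_left
                    _ = ENNReal.ofReal (max a b - min a b) := Real.volume_Ico
                calc (μ₀ (Set.Ico (min a b) (max a b))).toReal
                    ≤ (ENNReal.ofReal (max a b - min a b)).toReal :=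
                      ENNReal.toReal_mono ENNReal.ofReal_ne_top h1
                  _ = max a b - min a b := ENNReal.toReal_ofReal (by
                      have := min_le_max (a := a) (b := b); linarith)
            _ = Δ * |∑ j ∈ range (r+1), (p j - q j)| := by
                rw [max_sub_min_eq_abs, Finset.sum_sub_distrib]
                rw [ha, hb, hP, hQ]
                rw [abs_sub_comm]
                ring
  -- conclude
  have hfinal : W1 ν ν' ≤ ∑ r ∈ range n, (t (r+1) - t r) * |∑ j ∈ range (r+1), (p j - q j)| :=
    le_trans hW1le (le_trans (le_of_eq rfl) hcost)
  have hexp1 : (1:ℝ) ≤ Real.exp 1 := by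
    have := Real.add_one_le_exp (1:ℝ)
    linarith
  rcases Nat.eq_zero_or_pos n with rfl | hn
  · -- n = 0 : the sum is empty
    simp only [Finset.range_zero, Finset.sum_empty] at hfinal
    refine le_trans hfinal ?_
    have h0 : (((0 + 1 : ℕ) : ℝ) - 1)⁻¹ = 0 := by norm_num
    rw [h0, Real.rpow_zero]
    positivity
  · -- n ≥ 1 : apply the core bound
    set θ : ℝ := δ ^ ((n:ℝ)⁻¹) with hθdef
    have hδ0 : 0 ≤ δ := le_trans (abs_nonneg _) (hm 1 le_rfl (by omega))
    have hθ0 : 0 ≤ θ := Real.rpow_nonneg hδ0 _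
    have hδθ : δ = θ ^ n := (Real.rpow_inv_natCast_pow hδ0 (by omega)).symm
    have hcore := core_bound n hn t ht htb (fun j => p j - q j) δ θ
      (by rw [Finset.sum_sub_distrib, hpsum, hqsum]; ring) hmom hD hθ0 hδθ
    have hcast : (((n:ℕ)+1 : ℝ) - 1)⁻¹ = ((n:ℝ))⁻¹ := by push_cast; ring_nf
    calc W1 ν ν' ≤ 4 * n * θ := le_trans hfinal hcore
      _ ≤ 4 * Real.exp 1 * ((n:ℝ)+1) * θ := by
          have hn1 : (n:ℝ) ≤ (n:ℝ) + 1 := by linarith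
          have h1 : 4*(n:ℝ)*θ ≤ 4*((n:ℝ)+1)*θ := by
            have := mul_le_mul_of_nonneg_right hn1 hθ0
            linarith
          have hx : (0:ℝ) ≤ ((n:ℝ)+1)*θ := by positivity
          have h2 := mul_nonneg (sub_nonneg.mpr hexp1) hx
          nlinarith
      _ = 4 * Real.exp 1 * ((n:ℕ)+1 : ℕ) * δ ^ ((((n:ℕ)+1 : ℕ) : ℝ) - 1)⁻¹ := by
          have hc2 : ((((n:ℕ)+1 : ℕ) : ℝ) - 1)⁻¹ = ((n:ℝ))⁻¹ := by push_cast; ring_nf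
          rw [hc2, ← hθdef]
          push_cast
          ring
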